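/- arXiv:2309.00849 — 3 statements merged into one kernel-verified Lean document; each statement's English description precedes it below -/
import Mathlib

section
/- There exists a continuous function a : [0,∞) → [0,∞) such that a ∉ L^q(0,∞) for every 1 ≤ q ≤ ∞, yet sup_{t>0} (1/t)∫₀ᵗ a(s) ds < ∞. -/
open MeasureTheory Filter Set

noncomputable def gg (n : ℕ) (t : ℝ) : ℝ := n * max 0 (1 - 4 ^ n * |t - n|)

noncomputable def ff (t : ℝ) : ℝ := gg (round t).toNat t

noncomputable def aa (t : ℝ) : ℝ := 1 + ff t

lemma gg_nonneg (n : ℕ) (t : ℝ) : 0 ≤ gg n t :=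
  mul_nonneg (Nat.cast_nonneg n) (le_max_left _ _)

lemma gg_le (n : ℕ) (t : ℝ) : gg n t ≤ n := by
  have h1 : max 0 (1 - 4 ^ n * |t - (n:ℝ)|) ≤ 1 := by
    apply max_le zero_le_one
    nlinarith [abs_nonneg (t - (n:ℝ)), pow_pos (by norm_num : (0:ℝ) < 4) n,
      mul_nonneg (le_of_lt (pow_pos (by norm_num : (0:ℝ) < 4) n)) (abs_nonneg (t - (n:ℝ)))]
  calc gg n t ≤ (n:ℝ) * 1 := mul_le_mul_of_nonneg_left h1 (Nat.cast_nonneg n)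
  _ = n := mul_one _

lemma gg_cont (n : ℕ) : Continuous (gg n) := by
  unfold gg; fun_prop

lemma gg_zero_of_far {n : ℕ} {t : ℝ} (h : (4:ℝ)⁻¹ ^ n ≤ |t - n|) : gg n t = 0 := by
  have h4 : (0:ℝ) < 4 ^ n := pow_pos (by norm_num) n
  have : (1:ℝ) - 4 ^ n * |t - (n:ℝ)| ≤ 0 := by
    have : (1:ℝ) = 4 ^ n * (4:ℝ)⁻¹ ^ n := by
      rw [← mul_pow]; norm_num
    nlinarith
  unfold gg
  rw [max_eq_left this, mul_zero]

lemma round_eq_of_mem {n : ℤ} {s : ℝ} (h1 : (n:ℝ) - 1/2 ≤ s) (h2 : s < (n:ℝ) + 1/2) :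
    round s = n := by
  rw [round_eq, Int.floor_eq_iff]
  constructor <;> push_cast <;> linarith

lemma ff_nonneg (t : ℝ) : 0 ≤ ff t := gg_nonneg _ _

lemma inv4_le {n : ℕ} (hn : 1 ≤ n) : (4:ℝ)⁻¹ ^ n ≤ 4⁻¹ := by
  calc (4:ℝ)⁻¹ ^ n ≤ 4⁻¹ ^ 1 := by
        apply pow_le_pow_of_le_one (by norm_num) (by norm_num) hn
  _ = 4⁻¹ := pow_one _

/-- if round t ≤ 0 then ff t = 0 -/
lemma ff_zero_of_nonpos {t : ℝ} (h : round t ≤ 0) : ff t = 0 := by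
  have : (round t).toNat = 0 := Int.toNat_of_nonpos h
  unfold ff
  rw [this]
  unfold gg
  simp

lemma ff_zero_of_far {t : ℝ} (h : (1:ℝ)/4 ≤ |t - round t|) : ff t = 0 := by
  rcases le_or_gt (round t) 0 with hn | hn
  · exact ff_zero_of_nonpos hn
  · have he : ((round t).toNat : ℝ) = (round t : ℝ) := by
      exact_mod_cast Int.toNat_of_nonneg hn.le
    apply gg_zero_of_far
    rw [he]
    calc (4:ℝ)⁻¹ ^ (round t).toNat ≤ 4⁻¹ := inv4_le (by omega)
    _ ≤ |t - (round t : ℝ)| := by linarith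

lemma ff_zero_low {t : ℝ} (h : t ≤ 3/4) : ff t = 0 := by
  rcases le_or_gt (round t) 0 with hn | hn
  · exact ff_zero_of_nonpos hn
  · have h1 : (round t : ℝ) - 1/2 ≤ t := by
      have := abs_sub_round t
      rw [abs_le] at this; linarith
    have : round t = 1 := by
      have : (round t : ℝ) ≤ 5/4 := by linarith
      have h2 : round t ≤ 1 := by
        by_contra hc
        push_neg at hc
        have : (2:ℝ) ≤ (round t:ℝ) := by exact_mod_cast hc
        linarith
      omega
    apply ff_zero_of_far
    rw [this]
    push_cast
    rw [abs_sub_comm, abs_of_nonneg (by linarith)]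
    linarith

lemma ff_cont : Continuous ff := by
  rw [continuous_iff_continuousAt]
  intro t
  by_cases hh : ∃ k : ℤ, t + 1/2 = k
  · -- near a half-integer, ff vanishes
    obtain ⟨k, hk⟩ := hh
    have hev : ∀ s ∈ Metric.ball t (1/4), ff s = 0 := by
      intro s hs
      rw [Metric.mem_ball, Real.dist_eq] at hs
      rcases le_or_gt (round s) 0 with hn | hn
      · exact ff_zero_of_nonpos hn
      · apply ff_zero_of_far
        have h1 : |t - (round s : ℝ)| ≥ 1/2 := by
          have : t - (round s:ℝ) = ((k : ℝ) - round s) - 1/2 := by linarith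
          rw [this]
          rcases le_or_gt ((k:ℝ) - round s) 0 with hc | hc
          · rw [abs_of_nonpos (by linarith)]; linarith
          · have : (1:ℝ) ≤ (k:ℝ) - round s := by exact_mod_cast (by exact_mod_cast hc : (0:ℤ) < k - round s)
            rw [abs_of_nonneg (by linarith)]; linarith
        have : |t - (round s:ℝ)| - |s - t| ≤ |s - (round s:ℝ)| := by
          have := abs_sub_abs_le_abs_sub (t - (round s:ℝ)) (t - s)
          rw [abs_sub_comm t s] at this
          have e : t - (round s:ℝ) - (t - s) = s - (round s:ℝ) := by ring
          rw [e] at this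
          linarith [abs_sub_comm t s ▸ this]
        linarith
    apply ContinuousAt.congr continuousAt_const
    filter_upwards [Metric.ball_mem_nhds t (by norm_num : (0:ℝ) < 1/4)] with s hs
    exact (hev s hs).symm
  · -- round locally constant
    push_neg at hh
    set n := round t with hn
    have hl : (n:ℝ) - 1/2 < t := by
      have h1 : (n:ℝ) - 1/2 ≤ t := by
        have := abs_sub_round t; rw [abs_le] at this; linarith
      rcases h1.lt_or_eq with h | h
      · exact h
      · exfalso; exact hh n (by push_cast; linarith)
    have hr : t < (n:ℝ) + 1/2 := by
      have h1 : t ≤ (n:ℝ) + 1/2 := by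
        have := abs_sub_round t; rw [abs_le] at this; linarith
      rcases h1.lt_or_eq with h | h
      · exact h
      · exfalso; exact hh (n+1) (by push_cast; linarith)
    apply ContinuousAt.congr ((gg_cont n.toNat).continuousAt)
    have : Set.Ioo ((n:ℝ) - 1/2) ((n:ℝ) + 1/2) ∈ nhds t := by
      exact Ioo_mem_nhds hl hr
    filter_upwards [this] with s hs
    unfold ff
    rw [round_eq_of_mem hs.1.le hs.2]

lemma ff_intble (u v : ℝ) : IntervalIntegrable ff volume u v :=
  ff_cont.intervalIntegrable u v

lemma round_natCast_eq {n : ℕ} {s : ℝ} (h1 : (n:ℝ) - 1/2 ≤ s) (h2 : s < (n:ℝ) + 1/2) :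
    (round s).toNat = n := by
  have : round s = (n:ℤ) := round_eq_of_mem (by push_cast; linarith) (by push_cast; linarith)
  rw [this]; exact Int.toNat_natCast n

lemma int_unit (n : ℕ) :
    ∫ s in ((n:ℝ) - 1/2)..((n:ℝ) + 1/2), ff s ≤ 2 * (2⁻¹:ℝ) ^ n := by
  rcases Nat.eq_zero_or_pos n with hn | hn
  · subst hn
    push_cast
    have : ∫ s in ((0:ℝ) - 1/2)..((0:ℝ) + 1/2), ff s = 0 := by
      rw [show (∫ s in ((0:ℝ) - 1/2)..((0:ℝ) + 1/2), ff s)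
          = ∫ s in ((0:ℝ) - 1/2)..((0:ℝ) + 1/2), (0:ℝ) from
        intervalIntegral.integral_congr (fun s hs => by
          rw [Set.uIcc_of_le (by norm_num)] at hs
          exact ff_zero_low (by linarith [hs.2]))]
      simp
    rw [this]; norm_num
  · set w : ℝ := (4:ℝ)⁻¹ ^ n with hw
    have hwpos : 0 < w := by positivity
    have hwle : w ≤ 4⁻¹ := inv4_le hn
    have hn1 : (1:ℝ) ≤ (n:ℝ) := by exact_mod_cast hn
    -- split into three pieces
    have hsplit2 : ∫ s in ((n:ℝ) - w)..((n:ℝ) + 1/2), ff s =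
        (∫ s in ((n:ℝ) - w)..((n:ℝ) + w), ff s) + ∫ s in ((n:ℝ) + w)..((n:ℝ) + 1/2), ff s :=
      (intervalIntegral.integral_add_adjacent_intervals (ff_intble _ _) (ff_intble _ _)).symm
    have hsplit1 : ∫ s in ((n:ℝ) - 1/2)..((n:ℝ) + 1/2), ff s =
        (∫ s in ((n:ℝ) - 1/2)..((n:ℝ) - w), ff s) + ∫ s in ((n:ℝ) - w)..((n:ℝ) + 1/2), ff s :=
      (intervalIntegral.integral_add_adjacent_intervals (ff_intble _ _) (ff_intble _ _)).symm
    have hzero1 : ∫ s in ((n:ℝ) - 1/2)..((n:ℝ) - w), ff s = 0 := by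
      rw [show (∫ s in ((n:ℝ) - 1/2)..((n:ℝ) - w), ff s)
          = ∫ s in ((n:ℝ) - 1/2)..((n:ℝ) - w), (0:ℝ) from
        intervalIntegral.integral_congr (fun s hs => by
          rw [Set.uIcc_of_le (by linarith)] at hs
          obtain ⟨hs1, hs2⟩ := hs
          unfold ff
          rw [round_natCast_eq (n := n) (by linarith) (by linarith)]
          exact gg_zero_of_far (by rw [abs_sub_comm, abs_of_nonneg (by linarith)]; linarith))]
      simp
    have hzero3 : ∫ s in ((n:ℝ) + w)..((n:ℝ) + 1/2), ff s = 0 := by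
      rw [show (∫ s in ((n:ℝ) + w)..((n:ℝ) + 1/2), ff s)
          = ∫ s in ((n:ℝ) + w)..((n:ℝ) + 1/2), (0:ℝ) from
        intervalIntegral.integral_congr (fun s hs => by
          rw [Set.uIcc_of_le (by linarith)] at hs
          obtain ⟨hs1, hs2⟩ := hs
          rcases hs2.lt_or_eq with hlt | heq
          · unfold ff
            rw [round_natCast_eq (n := n) (by linarith) (by linarith)]
            exact gg_zero_of_far (by rw [abs_of_nonneg (by linarith)]; linarith)
          · unfold ff
            have : (round s).toNat = n + 1 := by
              apply round_natCast_eq <;> push_cast <;> [linarith; linarith]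
            rw [this]
            apply gg_zero_of_far
            have h14 : (4:ℝ)⁻¹ ^ (n+1) ≤ 4⁻¹ := inv4_le (by omega)
            rw [abs_sub_comm, abs_of_nonneg (by push_cast; linarith)]
            push_cast; linarith)]
      simp
    have hmid : ∫ s in ((n:ℝ) - w)..((n:ℝ) + w), ff s ≤ (n:ℝ) * (2 * w) := by
      have : ∫ s in ((n:ℝ) - w)..((n:ℝ) + w), ff s ≤
          ∫ _s in ((n:ℝ) - w)..((n:ℝ) + w), (n:ℝ) := by
        apply intervalIntegral.integral_mono_on (by linarith) (ff_intble _ _)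
          intervalIntegrable_const
        intro s hs
        obtain ⟨hs1, hs2⟩ := hs
        unfold ff
        rw [round_natCast_eq (n := n) (by linarith) (by linarith)]
        exact gg_le n s
      rw [intervalIntegral.integral_const, smul_eq_mul] at this
      calc ∫ s in ((n:ℝ) - w)..((n:ℝ) + w), ff s ≤ ((n:ℝ) + w - ((n:ℝ) - w)) * n := this
      _ = (n:ℝ) * (2 * w) := by ring
    have hbound : (n:ℝ) * (2 * w) ≤ 2 * (2⁻¹:ℝ) ^ n := by
      have h1 : (n:ℝ) ≤ 2 ^ n := by exact_mod_cast (Nat.lt_two_pow_self (n := n)).le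
      have hw2 : w = (2⁻¹:ℝ) ^ n * (2⁻¹:ℝ) ^ n := by rw [hw, ← mul_pow]; norm_num
      have hp : (0:ℝ) < (2⁻¹:ℝ) ^ n := by positivity
      have h2 : (2⁻¹:ℝ) ^ n = ((2:ℝ) ^ n)⁻¹ := by rw [← inv_pow]
      have h3 : (n:ℝ) * (2⁻¹:ℝ) ^ n ≤ 1 := by
        rw [h2]
        have h4 : (0:ℝ) < 2 ^ n := by positivity
        calc (n:ℝ) * ((2:ℝ) ^ n)⁻¹ ≤ (2:ℝ) ^ n * ((2:ℝ) ^ n)⁻¹ := by gcongr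
        _ = 1 := mul_inv_cancel₀ (ne_of_gt h4)
      rw [hw2]; nlinarith
    rw [hsplit1, hsplit2, hzero1, hzero3]
    linarith

lemma int_cum (M : ℕ) :
    ∫ s in (1/2:ℝ)..((M:ℝ) + 1/2), ff s ≤ 4 - 4 * (2⁻¹:ℝ) ^ M := by
  induction M with
  | zero => simp
  | succ M ih =>
    have hsplit : ∫ s in (1/2:ℝ)..(((M:ℕ)+1:ℕ):ℝ) + 1/2, ff s =
        (∫ s in (1/2:ℝ)..((M:ℝ) + 1/2), ff s) +
          ∫ s in ((M:ℝ) + 1/2)..(((M:ℕ)+1:ℕ):ℝ) + 1/2, ff s := by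
      exact (intervalIntegral.integral_add_adjacent_intervals (ff_intble _ _) (ff_intble _ _)).symm
    have hlast : ∫ s in ((M:ℝ) + 1/2)..(((M:ℕ)+1:ℕ):ℝ) + 1/2, ff s ≤ 2 * (2⁻¹:ℝ) ^ (M+1) := by
      have := int_unit (M+1)
      have e1 : (((M:ℕ)+1:ℕ):ℝ) - 1/2 = (M:ℝ) + 1/2 := by push_cast; ring
      rw [e1] at this
      exact_mod_cast this
    have hp : (0:ℝ) < (2⁻¹:ℝ) ^ M := by positivity
    have e2 : (2⁻¹:ℝ) ^ (M+1) = 2⁻¹ * 2⁻¹ ^ M := by ring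
    push_cast at hsplit hlast ⊢
    rw [hsplit]
    rw [e2] at hlast ⊢
    linarith

lemma int_ff_le {t : ℝ} (ht : 0 ≤ t) : ∫ s in (0:ℝ)..t, ff s ≤ 4 := by
  set M : ℕ := ⌈t⌉₊ with hM
  have htM : t ≤ (M:ℝ) + 1/2 := by
    have := Nat.le_ceil t
    linarith
  have h1 : ∫ s in (0:ℝ)..((M:ℝ) + 1/2), ff s =
      (∫ s in (0:ℝ)..t, ff s) + ∫ s in t..((M:ℝ) + 1/2), ff s :=
    (intervalIntegral.integral_add_adjacent_intervals (ff_intble _ _) (ff_intble _ _)).symm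
  have h2 : 0 ≤ ∫ s in t..((M:ℝ) + 1/2), ff s :=
    intervalIntegral.integral_nonneg htM (fun s _ => ff_nonneg s)
  have h3 : ∫ s in (0:ℝ)..((M:ℝ) + 1/2), ff s =
      (∫ s in (0:ℝ)..(1/2:ℝ), ff s) + ∫ s in (1/2:ℝ)..((M:ℝ) + 1/2), ff s :=
    (intervalIntegral.integral_add_adjacent_intervals (ff_intble _ _) (ff_intble _ _)).symm
  have h4 : ∫ s in (0:ℝ)..(1/2:ℝ), ff s = 0 := by
    rw [show (∫ s in (0:ℝ)..(1/2:ℝ), ff s) = ∫ s in (0:ℝ)..(1/2:ℝ), (0:ℝ) from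
      intervalIntegral.integral_congr (fun s hs => by
        rw [Set.uIcc_of_le (by norm_num)] at hs
        exact ff_zero_low (by linarith [hs.2]))]
    simp
  have h5 := int_cum M
  have hp : (0:ℝ) < (2⁻¹:ℝ) ^ M := by positivity
  linarith

lemma aa_cont : Continuous aa := continuous_const.add ff_cont

lemma aa_nonneg (t : ℝ) : 0 ≤ aa t := by
  have := ff_nonneg t; unfold aa; linarith

lemma one_le_aa (t : ℝ) : 1 ≤ aa t := by
  have := ff_nonneg t; unfold aa; linarith

lemma ff_big {m : ℕ} (hm : 1 ≤ m) {s : ℝ}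
    (hs : s ∈ Icc ((m:ℝ) - 4⁻¹^m/2) ((m:ℝ) + 4⁻¹^m/2)) : (m:ℝ)/2 ≤ ff s := by
  obtain ⟨hs1, hs2⟩ := hs
  have hwle : (4:ℝ)⁻¹ ^ m ≤ 4⁻¹ := inv4_le hm
  have hwpos : (0:ℝ) < 4⁻¹ ^ m := by positivity
  unfold ff
  rw [round_natCast_eq (n := m) (by linarith) (by linarith)]
  unfold gg
  have habs : |s - (m:ℝ)| ≤ 4⁻¹^m/2 := by
    rw [abs_le]; constructor <;> linarith
  have hprod : (4:ℝ)^m * |s - (m:ℝ)| ≤ 1/2 := by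
    have h1 : (4:ℝ)^m * |s - (m:ℝ)| ≤ (4:ℝ)^m * (4⁻¹^m/2) := by
      apply mul_le_mul_of_nonneg_left habs (by positivity)
    have h2 : (4:ℝ)^m * (4⁻¹^m/2) = 1/2 := by
      rw [show (4:ℝ)^m * (4⁻¹^m/2) = (4 * 4⁻¹:ℝ)^m / 2 by rw [mul_pow]; ring]
      norm_num
    linarith
  have h3 : (1:ℝ)/2 ≤ max 0 (1 - 4^m * |s - (m:ℝ)|) := by
    apply le_max_of_le_right; linarith
  calc (m:ℝ)/2 = (m:ℝ) * (1/2) := by ring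
  _ ≤ (m:ℝ) * max 0 (1 - 4^m * |s - (m:ℝ)|) :=
      mul_le_mul_of_nonneg_left h3 (Nat.cast_nonneg m)

lemma not_memLp (q : ENNReal) (hq : 1 ≤ q) :
    ¬ MemLp aa q (volume.restrict (Ioi (0:ℝ))) := by
  intro hmem
  set μ := volume.restrict (Ioi (0:ℝ)) with hμ
  by_cases hqt : q = ⊤
  · -- essential unboundedness
    subst hqt
    have h2 : eLpNormEssSup aa μ < ⊤ := by
      have := hmem.2
      rwa [eLpNorm_exponent_top] at this
    obtain ⟨n, hn⟩ := ENNReal.exists_nat_gt h2.ne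
    have hae : ∀ᵐ x ∂μ, (‖aa x‖₊ : ENNReal) < (n : ENNReal) :=
      (ae_le_eLpNormEssSup).mono fun x hx => lt_of_le_of_lt hx hn
    rw [ae_iff] at hae
    set m : ℕ := 2 * n + 2 with hm
    set S : Set ℝ := Icc ((m:ℝ) - 4⁻¹^m/2) ((m:ℝ) + 4⁻¹^m/2) with hS
    have hwle : (4:ℝ)⁻¹ ^ m ≤ 4⁻¹ := inv4_le (by omega)
    have hwpos : (0:ℝ) < 4⁻¹ ^ m := by positivity
    have hm1 : (1:ℝ) ≤ (m:ℝ) := by exact_mod_cast (by omega : 1 ≤ m)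
    have hsub : S ⊆ {x | ¬ (‖aa x‖₊ : ENNReal) < (n : ENNReal)} := by
      intro s hs
      have hbig : (m:ℝ)/2 ≤ ff s := ff_big (by omega) hs
      have haas : (n:ℝ) + 1 ≤ aa s := by
        have : ((m:ℝ))/2 = (n:ℝ) + 1 := by
          rw [hm]; push_cast; ring
        unfold aa; linarith
      simp only [Set.mem_setOf_eq, not_lt]
      have h1 : ((n : NNReal) : ENNReal) ≤ (‖aa s‖₊ : ENNReal) := by
        rw [ENNReal.coe_le_coe]
        have hns : (n:ℝ) ≤ ‖aa s‖ := by
          rw [Real.norm_eq_abs, abs_of_nonneg (aa_nonneg s)]; linarith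
        exact_mod_cast hns
      simpa using h1
    have hSmeas : μ S = ENNReal.ofReal ((4:ℝ)⁻¹^m) := by
      rw [hμ, Measure.restrict_apply measurableSet_Icc]
      have : S ∩ Ioi 0 = S := by
        apply Set.inter_eq_self_of_subset_left
        intro x hx
        have := hx.1
        simp only [Set.mem_Ioi]
        have : (m:ℝ) - 4⁻¹^m/2 ≤ x := hx.1
        linarith
      rw [this, hS, Real.volume_Icc]
      congr 1; ring
    have hpos : 0 < μ S := by
      rw [hSmeas]
      exact ENNReal.ofReal_pos.mpr hwpos
    have : μ S = 0 := measure_mono_null hsub hae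
    rw [this] at hpos
    exact lt_irrefl 0 hpos
  · -- finite q: constant 1 would be in Lp over infinite measure
    have hone : MemLp (fun _ : ℝ => (1:ℝ)) q μ := by
      apply hmem.of_le aestronglyMeasurable_const
      apply ae_of_all
      intro x
      rw [Real.norm_eq_abs, Real.norm_eq_abs, abs_one, abs_of_nonneg (aa_nonneg x)]
      exact one_le_aa x
    rw [memLp_const_iff (by positivity) hqt] at hone
    rcases hone with h | h
    · norm_num at h
    · rw [hμ, Measure.restrict_apply_univ, Real.volume_Ioi] at h
      exact lt_irrefl ⊤ h

theorem stmt_4 :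
    ∃ a : ℝ → ℝ, ContinuousOn a (Ici 0) ∧ (∀ t ∈ Ici (0:ℝ), 0 ≤ a t) ∧
      (∀ q : ENNReal, 1 ≤ q → ¬ MemLp a q (volume.restrict (Ioi (0:ℝ)))) ∧
      (∃ C : ℝ, ∀ t > (0:ℝ), (1 / t) * ∫ s in (0:ℝ)..t, a s ≤ C) := by
  refine ⟨aa, aa_cont.continuousOn, fun t _ => aa_nonneg t, not_memLp, ⟨7, ?_⟩⟩
  intro t ht
  have hint : ∫ s in (0:ℝ)..t, aa s = t + ∫ s in (0:ℝ)..t, ff s := by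
    unfold aa
    rw [intervalIntegral.integral_add (intervalIntegrable_const) (ff_intble 0 t)]
    simp
  have hff0 : 0 ≤ ∫ s in (0:ℝ)..t, ff s :=
    intervalIntegral.integral_nonneg ht.le (fun s _ => ff_nonneg s)
  rcases le_or_gt t (3/4) with hc | hc
  · have hz : ∫ s in (0:ℝ)..t, ff s = 0 := by
      rw [show (∫ s in (0:ℝ)..t, ff s) = ∫ s in (0:ℝ)..t, (0:ℝ) from
        intervalIntegral.integral_congr (fun s hs => by
          rw [Set.uIcc_of_le ht.le] at hs
          exact ff_zero_low (by linarith [hs.2]))]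
      simp
    rw [hint, hz, add_zero, one_div, inv_mul_cancel₀ (ne_of_gt ht)]
    norm_num
  · have h4 : ∫ s in (0:ℝ)..t, ff s ≤ 4 := int_ff_le ht.le
    have h5 : ∫ s in (0:ℝ)..t, aa s ≤ t + 4 := by rw [hint]; linarith
    have h6 : (1/t) * ∫ s in (0:ℝ)..t, aa s ≤ (1/t) * (t + 4) :=
      mul_le_mul_of_nonneg_left h5 (by positivity)
    have h7 : (1/t) * (t + 4) = 1 + 4/t := by field_simp
    have h8 : 4/t ≤ 16/3 := by
      rw [div_le_div_iff₀ ht (by norm_num)]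
      linarith
    linarith
end

section
/- For every α > 0 there exists a continuous function h : [0,∞) → [0,∞) with h(t) = 0 on [0,1] that is unbounded, and such that for every integer n ≥ 1 and every q ∈ [1,∞), ∫ₙ^{n+1} h(t)^q dt = (2^{2q-1}/(q+1)) · n^{q−α−1}. -/
open MeasureTheory Filter Set

noncomputable def tentF (α : ℝ) (n : ℕ) (t : ℝ) : ℝ :=
  max 0 (min (16 * (n:ℝ) ^ (α+2) * (t - n))
             (16 * (n:ℝ) ^ (α+2) * ((n:ℝ) + 1 / (2 * (n:ℝ) ^ (α+1)) - t)))

noncomputable def hfun (α : ℝ) (t : ℝ) : ℝ :=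
  if t < 1 then 0 else tentF α ⌊t⌋₊ t

lemma tentF_nonneg (α : ℝ) (n : ℕ) (t : ℝ) : 0 ≤ tentF α n t := le_max_left _ _

lemma tentF_continuous (α : ℝ) (n : ℕ) : Continuous (tentF α n) := by
  unfold tentF; fun_prop

lemma tentF_zero_left (α : ℝ) (n : ℕ) {t : ℝ} (ht : t ≤ n) : tentF α n t = 0 := by
  have h1 : 16 * (n:ℝ) ^ (α+2) * (t - n) ≤ 0 := by
    apply mul_nonpos_of_nonneg_of_nonpos
    · positivity
    · linarith
  have : min (16 * (n:ℝ) ^ (α+2) * (t - n))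
             (16 * (n:ℝ) ^ (α+2) * ((n:ℝ) + 1 / (2 * (n:ℝ) ^ (α+1)) - t)) ≤ 0 :=
    le_trans (min_le_left _ _) h1
  simpa [tentF] using max_eq_left this

lemma tentF_zero_right (α : ℝ) (n : ℕ) {t : ℝ}
    (ht : (n:ℝ) + 1 / (2 * (n:ℝ) ^ (α+1)) ≤ t) : tentF α n t = 0 := by
  have h1 : 16 * (n:ℝ) ^ (α+2) * ((n:ℝ) + 1 / (2 * (n:ℝ) ^ (α+1)) - t) ≤ 0 := by
    apply mul_nonpos_of_nonneg_of_nonpos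
    · positivity
    · linarith
  have : min (16 * (n:ℝ) ^ (α+2) * (t - n))
             (16 * (n:ℝ) ^ (α+2) * ((n:ℝ) + 1 / (2 * (n:ℝ) ^ (α+1)) - t)) ≤ 0 :=
    le_trans (min_le_right _ _) h1
  simpa [tentF] using max_eq_left this

lemma half_width_le (α : ℝ) (hα : 0 < α) {n : ℕ} (hn : 1 ≤ n) :
    1 / (2 * (n:ℝ) ^ (α+1)) ≤ 1/2 := by
  have hN : (1:ℝ) ≤ (n:ℝ) := by exact_mod_cast hn
  have h1 : (1:ℝ) ≤ (n:ℝ) ^ (α+1) := Real.one_le_rpow hN (by linarith)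
  rw [div_le_div_iff₀ (by positivity) (by norm_num)]
  linarith

lemma tentF_zero_right' (α : ℝ) (hα : 0 < α) {n : ℕ} (hn : 1 ≤ n) {t : ℝ}
    (ht : (n:ℝ) + 1/2 ≤ t) : tentF α n t = 0 :=
  tentF_zero_right α n (le_trans (by linarith [half_width_le α hα hn]) ht)

lemma hfun_eqOn (α : ℝ) (hα : 0 < α) {n : ℕ} (hn : 1 ≤ n) {t : ℝ}
    (ht : t ∈ Icc (n:ℝ) ((n:ℝ)+1)) : hfun α t = tentF α n t := by
  obtain ⟨h1, h2⟩ := ht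
  have hN : (1:ℝ) ≤ (n:ℝ) := by exact_mod_cast hn
  have ht1 : ¬ (t < 1) := by push_neg; linarith
  rcases lt_or_eq_of_le h2 with h2 | h2
  · have hf : ⌊t⌋₊ = n := by
      rw [Nat.floor_eq_iff (by linarith)]; exact ⟨h1, h2⟩
    simp [hfun, ht1, hf]
  · have hf : ⌊t⌋₊ = n + 1 := by
      rw [Nat.floor_eq_iff (by linarith)]
      constructor
      · push_cast; linarith
      · push_cast; linarith
    rw [hfun, if_neg ht1, hf]
    rw [tentF_zero_left α (n+1) (by push_cast; linarith),
        tentF_zero_right' α hα hn (by linarith)]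

lemma hfun_continuous (α : ℝ) (hα : 0 < α) : Continuous (hfun α) := by
  rw [continuous_iff_continuousAt]
  intro t₀
  rcases lt_or_ge t₀ 1 with h | h
  · have : ∀ᶠ t in nhds t₀, hfun α t = 0 := by
      filter_upwards [eventually_lt_nhds h] with t ht
      simp [hfun, ht]
    exact ContinuousAt.congr continuousAt_const (by filter_upwards [this] with t ht using ht.symm)
  · set m : ℕ := ⌊t₀⌋₊ with hm
    have hm1 : 1 ≤ m := by rw [hm]; exact Nat.le_floor (by exact_mod_cast h)
    have hfl : (m:ℝ) ≤ t₀ := Nat.floor_le (by linarith)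
    have hfu : t₀ < (m:ℝ) + 1 := Nat.lt_floor_add_one t₀
    have hmem : t₀ ∈ Ioo ((m:ℝ) - 1/4) ((m:ℝ) + 1) := ⟨by linarith, hfu⟩
    have hev : ∀ᶠ t in nhds t₀, hfun α t = tentF α m t := by
      filter_upwards [Ioo_mem_nhds hmem.1 hmem.2] with s hs
      obtain ⟨hs1, hs2⟩ := hs
      have hmR : (1:ℝ) ≤ (m:ℝ) := by exact_mod_cast hm1
      rcases lt_or_ge s 1 with hs3 | hs3
      · -- then m = 1 and s < 1 ≤ m so tentF = 0
        have hm2 : m = 1 := by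
          have : (m:ℝ) < s + 1/4 := by linarith
          have hlt : (m:ℝ) < 2 := by linarith
          have : m < 2 := by exact_mod_cast hlt
          omega
        rw [hfun, if_pos hs3, tentF_zero_left α m (by linarith)]
      · rcases lt_or_ge s (m:ℝ) with hs4 | hs4
        · -- s ∈ (m - 1/4, m), m ≥ 2, floor s = m - 1
          have hm2 : 2 ≤ m := by
            by_contra hc
            have : m = 1 := by omega
            rw [this] at hs4; norm_num at hs4; linarith
          have hcast : ((m-1 : ℕ) : ℝ) = (m:ℝ) - 1 := by
            push_cast [Nat.cast_sub (by omega : 1 ≤ m)]; ring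
          have hf : ⌊s⌋₊ = m - 1 := by
            rw [Nat.floor_eq_iff (by linarith)]
            rw [hcast]
            constructor <;> [linarith; linarith]
          have hs1' : ¬ (s < 1) := by push_neg; linarith
          rw [hfun, if_neg hs1', hf]
          rw [tentF_zero_right' α hα (by omega) (by rw [hcast]; linarith),
              tentF_zero_left α m (le_of_lt hs4)]
        · have hf : ⌊s⌋₊ = m := by
            rw [Nat.floor_eq_iff (by linarith)]; exact ⟨hs4, hs2⟩
          have hs1' : ¬ (s < 1) := by push_neg; linarith
          rw [hfun, if_neg hs1', hf]
    exact ContinuousAt.congr ((tentF_continuous α m).continuousAt)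
      (by filter_upwards [hev] with t ht using ht.symm)

lemma peak_val (α : ℝ) {n : ℕ} (hn : 1 ≤ n) :
    16 * (n:ℝ) ^ (α+2) * (1 / (4 * (n:ℝ) ^ (α+1))) = 4 * n := by
  have hN : (0:ℝ) < (n:ℝ) := by exact_mod_cast hn
  have h1 : (n:ℝ) ^ (α+2) = (n:ℝ) ^ (α+1) * n := by
    rw [show α+2 = (α+1)+1 by ring, Real.rpow_add hN, Real.rpow_one]
  have h2 : (n:ℝ) ^ (α+1) ≠ 0 := by positivity
  rw [h1]
  field_simp
  ring

lemma tentF_peak (α : ℝ) {n : ℕ} (hn : 1 ≤ n) :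
    tentF α n ((n:ℝ) + 1 / (4 * (n:ℝ) ^ (α+1))) = 4 * n := by
  have hN : (0:ℝ) < (n:ℝ) ^ (α+1) := by
    have : (0:ℝ) < (n:ℝ) := by exact_mod_cast hn
    positivity
  have hc : (n:ℝ) + 1 / (2 * (n:ℝ) ^ (α+1)) - ((n:ℝ) + 1 / (4 * (n:ℝ) ^ (α+1)))
      = 1 / (4 * (n:ℝ) ^ (α+1)) := by
    field_simp
    ring
  unfold tentF
  rw [hc]
  have : (n:ℝ) + 1 / (4 * (n:ℝ) ^ (α+1)) - (n:ℝ) = 1 / (4 * (n:ℝ) ^ (α+1)) := by ring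
  rw [this, min_self, peak_val α hn, max_eq_right (by positivity)]

lemma pow_arith (α q : ℝ) {N : ℝ} (hN : 0 < N) :
    2 * ((16 * N ^ (α+2)) ^ q * ((1 / (4 * N ^ (α+1))) ^ (q+1)))
      = 2 ^ (2*q - 1) * N ^ (q - α - 1) := by
  have h16 : ((16:ℝ)) = (2:ℝ) ^ ((4:ℕ):ℝ) := by
    rw [Real.rpow_natCast]; norm_num
  have h4 : ((4:ℝ)) = (2:ℝ) ^ ((2:ℕ):ℝ) := by
    rw [Real.rpow_natCast]; norm_num
  have e1 : (16 * N ^ (α+2)) ^ q = 2 ^ (4*q) * N ^ ((α+2)*q) := by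
    rw [Real.mul_rpow (by norm_num) (by positivity), ← Real.rpow_mul hN.le,
      h16, ← Real.rpow_mul (by norm_num)]
    norm_num
  have e2 : ((1 : ℝ) / (4 * N ^ (α+1))) ^ (q+1)
      = 1 / (2 ^ (2*(q+1)) * N ^ ((α+1)*(q+1))) := by
    rw [Real.div_rpow (by norm_num) (by positivity), Real.one_rpow,
      Real.mul_rpow (by norm_num) (by positivity), ← Real.rpow_mul hN.le,
      h4, ← Real.rpow_mul (by norm_num)]
    norm_num
  have e3 : (2:ℝ) ^ (2*q-1) = 2 * (2:ℝ) ^ (4*q) / (2:ℝ) ^ (2*(q+1)) := by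
    rw [show 2*q-1 = (1 + 4*q) - 2*(q+1) by ring, Real.rpow_sub (by norm_num),
      Real.rpow_add (by norm_num), Real.rpow_one]
  have e4 : N ^ (q-α-1) = N ^ ((α+2)*q) / N ^ ((α+1)*(q+1)) := by
    rw [← Real.rpow_sub hN]
    ring_nf
  rw [e1, e2, e3, e4]
  have p1 : (0:ℝ) < (2:ℝ) ^ (2*(q+1)) := Real.rpow_pos_of_pos (by norm_num) _
  have p2 : (0:ℝ) < N ^ ((α+1)*(q+1)) := Real.rpow_pos_of_pos hN _
  field_simp

lemma tent_integral (α : ℝ) (hα : 0 < α) {n : ℕ} (hn : 1 ≤ n) {q : ℝ} (hq : 1 ≤ q) :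
    ∫ t in (n:ℝ)..((n:ℝ)+1), (tentF α n t) ^ q
      = 2 ^ (2*q - 1) / (q + 1) * (n:ℝ) ^ (q - α - 1) := by
  have hN : (0:ℝ) < (n:ℝ) := by exact_mod_cast hn
  have hN1 : (1:ℝ) ≤ (n:ℝ) := by exact_mod_cast hn
  set N : ℝ := (n:ℝ) with hNdef
  set c : ℝ := 1 / (4 * N ^ (α+1)) with hcdef
  set A : ℝ := 16 * N ^ (α+2) with hAdef
  have hNa : (0:ℝ) < N ^ (α+1) := Real.rpow_pos_of_pos hN _
  have hNa1 : (1:ℝ) ≤ N ^ (α+1) := Real.one_le_rpow hN1 (by linarith)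
  have hc : 0 < c := by rw [hcdef]; positivity
  have hc4 : c ≤ 1/4 := by
    rw [hcdef, div_le_div_iff₀ (by positivity) (by norm_num)]
    linarith
  have hA : 0 < A := by rw [hAdef]; positivity
  have h2c : N + 1 / (2 * N ^ (α+1)) = N + 2*c := by
    rw [hcdef]; field_simp; ring
  have hq0 : q ≠ 0 := by linarith
  have Hcont : Continuous (fun t => tentF α n t ^ q) :=
    (tentF_continuous α n).rpow_const (fun x => Or.inr (by linarith))
  -- split the integral
  have hsplit : ∫ t in N..(N+1), (tentF α n t) ^ q
      = ((∫ t in N..(N+c), (tentF α n t) ^ q)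
        + ∫ t in (N+c)..(N+2*c), (tentF α n t) ^ q)
        + ∫ t in (N+2*c)..(N+1), (tentF α n t) ^ q := by
    rw [intervalIntegral.integral_add_adjacent_intervals
        (Hcont.intervalIntegrable _ _) (Hcont.intervalIntegrable _ _),
      intervalIntegral.integral_add_adjacent_intervals
        (Hcont.intervalIntegrable _ _) (Hcont.intervalIntegrable _ _)]
  -- third piece is zero
  have I3 : ∫ t in (N+2*c)..(N+1), (tentF α n t) ^ q = 0 := by
    rw [intervalIntegral.integral_congr (g := fun _ => (0:ℝ))]
    · exact intervalIntegral.integral_zero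
    · intro t ht
      rw [uIcc_of_le (by linarith)] at ht
      have : N + 1 / (2 * N ^ (α+1)) ≤ t := by rw [h2c]; exact ht.1
      simp only
      rw [tentF_zero_right α n this]
      exact Real.zero_rpow hq0
  -- first piece
  have key1 : ∀ t ∈ uIcc N (N+c), (tentF α n t) ^ q = A ^ q * (t - N) ^ q := by
    intro t ht
    rw [uIcc_of_le (by linarith)] at ht
    obtain ⟨ht1, ht2⟩ := ht
    have hmin : min (A * (t - N)) (A * (N + 1 / (2 * N ^ (α+1)) - t)) = A * (t - N) := by
      apply min_eq_left
      apply mul_le_mul_of_nonneg_left _ hA.le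
      rw [h2c]; linarith
    have htent : tentF α n t = A * (t - N) := by
      unfold tentF
      rw [← hAdef, ← hNdef, hmin]
      exact max_eq_right (by nlinarith)
    rw [htent, Real.mul_rpow hA.le (by linarith)]
  have I1 : ∫ t in N..(N+c), (tentF α n t) ^ q = A ^ q * (c ^ (q+1) / (q+1)) := by
    rw [intervalIntegral.integral_congr key1, intervalIntegral.integral_const_mul]
    congr 1
    have := intervalIntegral.integral_comp_sub_right (a := N) (b := N+c) (fun u => u ^ q) N
    rw [this, show N - N = 0 by ring, show N + c - N = c by ring,
      integral_rpow (Or.inl (by linarith)), Real.zero_rpow (by linarith)]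
    ring
  -- second piece
  have key2 : ∀ t ∈ uIcc (N+c) (N+2*c), (tentF α n t) ^ q = A ^ q * ((N+2*c) - t) ^ q := by
    intro t ht
    rw [uIcc_of_le (by linarith)] at ht
    obtain ⟨ht1, ht2⟩ := ht
    have hmin : min (A * (t - N)) (A * (N + 1 / (2 * N ^ (α+1)) - t)) = A * (N+2*c - t) := by
      rw [h2c]
      apply min_eq_right
      apply mul_le_mul_of_nonneg_left _ hA.le
      linarith
    have htent : tentF α n t = A * (N+2*c - t) := by
      unfold tentF
      rw [← hAdef, ← hNdef, hmin]
      exact max_eq_right (by nlinarith)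
    rw [htent, Real.mul_rpow hA.le (by linarith)]
  have I2 : ∫ t in (N+c)..(N+2*c), (tentF α n t) ^ q = A ^ q * (c ^ (q+1) / (q+1)) := by
    rw [intervalIntegral.integral_congr key2, intervalIntegral.integral_const_mul]
    congr 1
    have := intervalIntegral.integral_comp_sub_left (a := N+c) (b := N+2*c) (fun u => u ^ q) (N+2*c)
    rw [this, show N+2*c - (N+2*c) = 0 by ring, show N+2*c - (N+c) = c by ring,
      integral_rpow (Or.inl (by linarith)), Real.zero_rpow (by linarith)]
    ring
  rw [hsplit, I1, I2, I3]
  calc A ^ q * (c ^ (q+1) / (q+1)) + A ^ q * (c ^ (q+1) / (q+1)) + 0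
      = 2 * (A ^ q * c ^ (q+1)) / (q+1) := by ring
    _ = 2 ^ (2*q-1) * N ^ (q-α-1) / (q+1) := by
        rw [show 2 * (A ^ q * c ^ (q+1)) = 2 * (A ^ q * (c ^ (q+1))) by ring,
          hAdef, hcdef, pow_arith α q hN]
    _ = 2 ^ (2*q-1) / (q+1) * N ^ (q-α-1) := by ring

theorem stmt_5 (α : ℝ) (hα : 0 < α) :
    ∃ h : ℝ → ℝ, ContinuousOn h (Ici 0) ∧ (∀ t ∈ Ici (0:ℝ), 0 ≤ h t) ∧
      (∀ t ∈ Icc (0:ℝ) 1, h t = 0) ∧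
      (¬ ∃ C : ℝ, ∀ t ∈ Ici (0:ℝ), h t ≤ C) ∧
      (∀ n : ℕ, 1 ≤ n → ∀ q : ℝ, 1 ≤ q →
        ∫ t in (n:ℝ)..(n+1), (h t) ^ q
          = (2 ^ (2*q - 1) / (q + 1)) * (n:ℝ) ^ (q - α - 1)) := by
  refine ⟨hfun α, (hfun_continuous α hα).continuousOn, ?_, ?_, ?_, ?_⟩
  · intro t _
    unfold hfun
    split
    · exact le_refl _
    · exact tentF_nonneg α _ t
  · intro t ⟨_, ht1⟩
    rcases lt_or_eq_of_le ht1 with h | h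
    · simp [hfun, h]
    · subst h
      have : ⌊(1:ℝ)⌋₊ = 1 := by norm_num
      rw [hfun, if_neg (by norm_num), this, tentF_zero_left α 1 (by norm_num)]
  · rintro ⟨C, hC⟩
    obtain ⟨n, hn⟩ := exists_nat_gt C
    set n' : ℕ := max n 1 with hn'
    have hn1 : 1 ≤ n' := le_max_right _ _
    have hN1 : (1:ℝ) ≤ (n':ℝ) := by exact_mod_cast hn1
    have hNa1 : (1:ℝ) ≤ (n':ℝ) ^ (α+1) := Real.one_le_rpow hN1 (by linarith)
    set c : ℝ := 1 / (4 * (n':ℝ) ^ (α+1)) with hc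
    have hc0 : 0 < c := by rw [hc]; positivity
    have hc1 : c ≤ 1 := by
      rw [hc, div_le_one (by positivity)]; linarith
    have hmem : (n':ℝ) + c ∈ Icc ((n':ℝ)) ((n':ℝ)+1) := ⟨by linarith, by linarith⟩
    have hval : hfun α ((n':ℝ) + c) = 4 * n' := by
      rw [hfun_eqOn α hα hn1 hmem, hc, tentF_peak α hn1]
    have hle := hC ((n':ℝ) + c) (by simp only [mem_Ici]; linarith)
    rw [hval] at hle
    have hnn' : (n:ℝ) ≤ (n':ℝ) := by exact_mod_cast le_max_left n 1
    nlinarith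
  · intro n hn q hq
    rw [intervalIntegral.integral_congr
      (g := fun t => (tentF α n t) ^ q) (fun t ht => by
        rw [uIcc_of_le (by linarith)] at ht
        simp only
        rw [hfun_eqOn α hα hn ht])]
    exact tent_integral α hα hn hq
end

section
/- Let I ⊂ ℝ be an interval, X : I → [0,∞) continuous, and suppose X(t) ≤ a + b·X(t)^θ for all t ∈ I, where a, b > 0 and θ > 1 are constants. If for some t₀ ∈ I we have X(t₀) ≤ a and a·b^{1/(θ−1)} < (θ−1)·θ^{θ/(1−θ)}, then X(t) < θa/(θ−1) for all t ∈ I. -/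
open Set

theorem stmt_6 (I : Set ℝ) (hI : I.OrdConnected) (X : ℝ → ℝ)
    (hXcont : ContinuousOn X I) (hXnonneg : ∀ t ∈ I, 0 ≤ X t)
    (a b θ : ℝ) (ha : 0 < a) (hb : 0 < b) (hθ : 1 < θ)
    (hineq : ∀ t ∈ I, X t ≤ a + b * (X t) ^ θ)
    (t₀ : ℝ) (ht₀ : t₀ ∈ I) (hX₀ : X t₀ ≤ a)
    (hsmall : a * b ^ (1 / (θ - 1)) < (θ - 1) * θ ^ (θ / (1 - θ))) :
    ∀ t ∈ I, X t < θ * a / (θ - 1) := by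
  have hθ0 : (0:ℝ) < θ := by linarith
  have hs : (0:ℝ) < θ - 1 := by linarith
  set M := θ * a / (θ - 1) with hM
  have hMpos : 0 < M := by positivity
  have haM : a < M := by
    rw [hM, lt_div_iff₀ hs]; nlinarith
  -- key inequality: a + b * M ^ θ < M
  have hL : (a * b ^ (1/(θ-1))) ^ (θ-1) < ((θ-1) * θ ^ (θ/(1-θ))) ^ (θ-1) :=
    Real.rpow_lt_rpow (by positivity) hsmall hs
  have hLeq : (a * b ^ (1/(θ-1))) ^ (θ-1) = a ^ (θ-1) * b := by
    rw [Real.mul_rpow ha.le (Real.rpow_nonneg hb.le _), ← Real.rpow_mul hb.le,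
      one_div, inv_mul_cancel₀ hs.ne', Real.rpow_one]
  have hReq : ((θ-1) * θ ^ (θ/(1-θ))) ^ (θ-1) = (θ-1)^(θ-1) * θ ^ (-θ) := by
    rw [Real.mul_rpow hs.le (Real.rpow_nonneg hθ0.le _), ← Real.rpow_mul hθ0.le]
    have h1θ : (1:ℝ) - θ ≠ 0 := by linarith
    rw [show θ/(1-θ)*(θ-1) = -θ by field_simp; ring]
  rw [hLeq, hReq] at hL
  have h1 : b * M ^ (θ-1) < 1 / θ := by
    have e1 : M ^ (θ-1) = θ^(θ-1) * a^(θ-1) / (θ-1)^(θ-1) := by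
      rw [hM, Real.div_rpow (by positivity) hs.le, Real.mul_rpow hθ0.le ha.le]
    have e2 : θ^(-θ) * θ^(θ-1) = 1/θ := by
      rw [← Real.rpow_add hθ0]
      have : -θ + (θ-1) = -1 := by ring
      rw [this, Real.rpow_neg_one, one_div]
    have hqp : 0 < θ^(θ-1)/(θ-1)^(θ-1) := by positivity
    have hpne : ((θ-1:ℝ))^(θ-1) ≠ 0 := by positivity
    calc b * M^(θ-1) = (a^(θ-1)*b) * (θ^(θ-1)/(θ-1)^(θ-1)) := by rw [e1]; ring
      _ < ((θ-1)^(θ-1)*θ^(-θ)) * (θ^(θ-1)/(θ-1)^(θ-1)) :=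
          mul_lt_mul_of_pos_right hL hqp
      _ = θ^(-θ)*θ^(θ-1) := by field_simp
      _ = 1/θ := e2
  have hMθ : b * M ^ θ = (b * M ^ (θ-1)) * M := by
    rw [show θ = (θ-1)+1 by ring]
    rw [Real.rpow_add hMpos, Real.rpow_one]; ring
  have hMt : M * (θ - 1) = θ * a := by rw [hM]; field_simp
  have hkey : a + b * M ^ θ < M := by
    rw [hMθ]
    have h2 : (b * M ^ (θ-1)) * M < (1/θ) * M := by
      exact mul_lt_mul_of_pos_right h1 hMpos
    have h3 : (1/θ) * M * θ = M := by field_simp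
    nlinarith
  -- X never equals M
  have hM_not : ∀ t ∈ I, X t ≠ M := by
    intro t ht h
    have := hineq t ht
    rw [h] at this
    linarith
  have hIconn : IsPreconnected I := isPreconnected_iff_ordConnected.mpr hI
  have himg : IsPreconnected (X '' I) := hIconn.image X hXcont
  have himgOrd : (X '' I).OrdConnected := isPreconnected_iff_ordConnected.mp himg
  intro t ht
  by_contra h
  push_neg at h
  have hmem : M ∈ X '' I :=
    himgOrd.out ⟨t₀, ht₀, rfl⟩ ⟨t, ht, rfl⟩ ⟨by linarith, h⟩
  obtain ⟨s, hsI, hsX⟩ := hmem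
  exact hM_not s hsI hsX
end
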